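/- The operator L(z) on F_1 ⊗ F_l is stochastic in the sense that for every α ∈ {0,...,n} and every a ∈ D_l, the sum ∑_{β, b} L(z)^{β,b}_{α,a} = 1 - z t^l, independent of α and a. -/
import Mathlib


/-- Stochasticity of the operator `L(z)`: for `a ∈ D_l` (i.e. `a : Fin (n+1) → ℕ` with
`∑ a_i = l`) and any `α ∈ {0,…,n}`, the sum of the matrix elements
`L(z)^{β,b}_{α,a} = δ^{e_β+b}_{e_α+a} · t^{a_{β+1}+⋯+a_n} · (1 - t^{a_β} z^{θ(α=β)}) · z^{θ(α>β)}`
over `β ∈ {0,…,n}` and `b ∈ D_l` (whose components are necessarily `≤ l`, so `b` ranges over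
`Fin (l+1)`-valued functions with component sum `l`) equals `1 - z t^l`. -/
theorem stmt7 {K : Type*} [Field K] {n l : ℕ} (t z : K)
    (a : Fin (n + 1) → ℕ) (ha : ∑ i, a i = l) (α : Fin (n + 1)) :
    ∑ β : Fin (n + 1),
      ∑ b ∈ Finset.univ.filter (fun b : Fin (n + 1) → Fin (l + 1) => ∑ i, (b i : ℕ) = l),
        (if ∀ i : Fin (n + 1),
              (if i = β then 1 else 0) + (b i : ℕ) = (if i = α then 1 else 0) + a i
          then (1 : K) else 0) *
        t ^ (∑ i ∈ Finset.Ioi β, a i) *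
        (1 - t ^ (a β) * z ^ (if α = β then 1 else 0)) *
        z ^ (if β < α then 1 else 0)
      = 1 - z * t ^ l := by
  classical
  have hle : ∀ i, a i ≤ l := by
    intro i
    rw [← ha]
    exact Finset.single_le_sum (fun j _ => Nat.zero_le _) (Finset.mem_univ i)
  set C : Fin (n + 1) → K := fun β =>
    t ^ (∑ i ∈ Finset.Ioi β, a i) *
      (1 - t ^ (a β) * z ^ (if α = β then 1 else 0)) *
      z ^ (if β < α then 1 else 0) with hCdef
  have key : ∀ β : Fin (n + 1),
      (∑ b ∈ Finset.univ.filter (fun b : Fin (n + 1) → Fin (l + 1) => ∑ i, (b i : ℕ) = l),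
        (if ∀ i : Fin (n + 1),
              (if i = β then 1 else 0) + (b i : ℕ) = (if i = α then 1 else 0) + a i
          then (1 : K) else 0) *
        t ^ (∑ i ∈ Finset.Ioi β, a i) *
        (1 - t ^ (a β) * z ^ (if α = β then 1 else 0)) *
        z ^ (if β < α then 1 else 0)) = C β := by
    intro β
    have step1 : (∑ b ∈ Finset.univ.filter
          (fun b : Fin (n + 1) → Fin (l + 1) => ∑ i, (b i : ℕ) = l),
        (if ∀ i : Fin (n + 1),
              (if i = β then 1 else 0) + (b i : ℕ) = (if i = α then 1 else 0) + a i
          then (1 : K) else 0) *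
        t ^ (∑ i ∈ Finset.Ioi β, a i) *
        (1 - t ^ (a β) * z ^ (if α = β then 1 else 0)) *
        z ^ (if β < α then 1 else 0))
        = ∑ b ∈ Finset.univ.filter
          (fun b : Fin (n + 1) → Fin (l + 1) => ∑ i, (b i : ℕ) = l),
          (if ∀ i : Fin (n + 1),
              (if i = β then 1 else 0) + (b i : ℕ) = (if i = α then 1 else 0) + a i
            then C β else 0) := by
      refine Finset.sum_congr rfl fun b _ => ?_
      by_cases h : ∀ i : Fin (n + 1),
          (if i = β then 1 else 0) + (b i : ℕ) = (if i = α then 1 else 0) + a i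
      · rw [if_pos h, if_pos h, one_mul, hCdef]
      · rw [if_neg h, if_neg h, zero_mul, zero_mul, zero_mul]
    rw [step1, ← Finset.sum_filter, Finset.filter_filter, Finset.sum_const, nsmul_eq_mul]
    by_cases hba : β = α
    · -- unique b = a
      subst hba
      have hcard : (Finset.univ.filter
          (fun b : Fin (n + 1) → Fin (l + 1) => (∑ i, (b i : ℕ) = l) ∧
            ∀ i : Fin (n + 1),
              (if i = β then 1 else 0) + (b i : ℕ) = (if i = β then 1 else 0) + a i)).card = 1
            := by
        rw [Finset.card_eq_one]
        refine ⟨fun i => ⟨a i, Nat.lt_succ_of_le (hle i)⟩, ?_⟩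
        ext b
        simp only [Finset.mem_filter, Finset.mem_univ, true_and, Finset.mem_singleton]
        constructor
        · rintro ⟨-, h2⟩
          funext i
          exact Fin.ext (show (b i : ℕ) = a i by have := h2 i; omega)
        · rintro rfl
          exact ⟨by simpa using ha, fun i => rfl⟩
      rw [hcard, Nat.cast_one, one_mul]
    · have hab : ¬ α = β := fun h => hba h.symm
      by_cases hb0 : a β = 0
      · -- no valid b, and C β = 0
        have hcard : (Finset.univ.filter
            (fun b : Fin (n + 1) → Fin (l + 1) => (∑ i, (b i : ℕ) = l) ∧
              ∀ i : Fin (n + 1),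
                (if i = β then 1 else 0) + (b i : ℕ) = (if i = α then 1 else 0) + a i)).card = 0
              := by
          rw [Finset.card_eq_zero, Finset.filter_eq_empty_iff]
          rintro b - ⟨-, h2⟩
          have := h2 β
          rw [if_pos rfl, if_neg (fun h => hba h)] at this
          omega
        have hC0 : C β = 0 := by
          rw [hCdef]
          simp only [hb0, if_neg hab, pow_zero, mul_one, one_mul]
          ring
        rw [hcard, hC0, Nat.cast_zero, zero_mul]
      · -- unique b = a + e_α - e_β
        have haβ : 1 ≤ a β := Nat.one_le_iff_ne_zero.mpr hb0
        have hαβ : α ≠ β := hab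
        have hsum2 : a α + a β ≤ l := by
          rw [← ha, ← Finset.sum_pair hαβ]
          exact Finset.sum_le_sum_of_subset (Finset.subset_univ _)
        have hv1 : a α + 1 < l + 1 := by omega
        have hv2 : a β - 1 < l + 1 := by omega
        set b₀ : Fin (n + 1) → Fin (l + 1) := fun i =>
          if i = α then ⟨a α + 1, hv1⟩ else if i = β then ⟨a β - 1, hv2⟩
            else ⟨a i, Nat.lt_succ_of_le (hle i)⟩ with hb₀def
        have hval : ∀ i, (b₀ i : ℕ) = if i = α then a α + 1 else if i = β then a β - 1 else a i := by
          intro i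
          simp only [hb₀def]
          split_ifs <;> rfl
        have hsplit : ∀ f : Fin (n + 1) → ℕ,
            ∑ i, f i = (∑ i ∈ ({α, β} : Finset (Fin (n + 1)))ᶜ, f i) + (f α + f β) := by
          intro f
          rw [← Finset.sum_compl_add_sum ({α, β} : Finset (Fin (n + 1))) f,
            Finset.sum_pair hαβ]
        have hcard : (Finset.univ.filter
            (fun b : Fin (n + 1) → Fin (l + 1) => (∑ i, (b i : ℕ) = l) ∧
              ∀ i : Fin (n + 1),
                (if i = β then 1 else 0) + (b i : ℕ) = (if i = α then 1 else 0) + a i)).card = 1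
              := by
          rw [Finset.card_eq_one]
          refine ⟨b₀, ?_⟩
          ext b
          simp only [Finset.mem_filter, Finset.mem_univ, true_and, Finset.mem_singleton]
          constructor
          · rintro ⟨-, h2⟩
            funext i
            refine Fin.ext ?_
            rw [hval i]
            have h2i := h2 i
            by_cases h1 : i = α
            · subst h1
              rw [if_pos rfl]
              rw [if_neg (fun h => hba h.symm), if_pos rfl] at h2i
              omega
            · by_cases h3 : i = β
              · subst h3
                rw [if_neg h1, if_pos rfl]
                rw [if_pos rfl, if_neg h1] at h2i
                omega
              · rw [if_neg h1, if_neg h3]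
                rw [if_neg h3, if_neg h1] at h2i
                omega
          · rintro rfl
            constructor
            · have hsc : (∑ i, (b₀ i : ℕ))
                  = ∑ i, (if i = α then a α + 1 else if i = β then a β - 1 else a i) :=
                Finset.sum_congr rfl fun i _ => hval i
              rw [hsc, hsplit]
              have ha' : (∑ i ∈ ({α, β} : Finset (Fin (n + 1)))ᶜ, a i) + (a α + a β) = l := by
                rw [← hsplit]; exact ha
              have hcompl : (∑ i ∈ ({α, β} : Finset (Fin (n + 1)))ᶜ,
                  (if i = α then a α + 1 else if i = β then a β - 1 else a i))
                  = ∑ i ∈ ({α, β} : Finset (Fin (n + 1)))ᶜ, a i := by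
                refine Finset.sum_congr rfl fun i hi => ?_
                simp only [Finset.mem_compl, Finset.mem_insert, Finset.mem_singleton,
                  not_or] at hi
                rw [if_neg hi.1, if_neg hi.2]
              rw [hcompl, if_pos rfl, if_neg (Ne.symm hαβ), if_pos rfl]
              omega
            · intro i
              rw [hval i]
              by_cases h1 : i = α
              · subst h1
                rw [if_pos rfl, if_neg (fun h => hba h.symm), if_pos rfl]
                omega
              · by_cases h3 : i = β
                · subst h3
                  rw [if_neg h1, if_pos rfl, if_pos rfl, if_neg h1]
                  omega
                · rw [if_neg h1, if_neg h3, if_neg h3, if_neg h1]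
        rw [hcard, Nat.cast_one, one_mul]
  rw [Finset.sum_congr rfl (fun β _ => key β)]
  -- telescoping
  set G : ℕ → K := fun j =>
    z ^ (if j ≤ (α : ℕ) then 1 else 0) *
      t ^ (∑ i ∈ Finset.univ.filter (fun i : Fin (n + 1) => j ≤ (i : ℕ)), a i) with hGdef
  have hCG : ∀ β : Fin (n + 1), C β = G ((β : ℕ) + 1) - G (β : ℕ) := by
    intro β
    have hIoi : Finset.Ioi β
        = Finset.univ.filter (fun i : Fin (n + 1) => (β : ℕ) + 1 ≤ (i : ℕ)) := by
      ext i
      simp only [Finset.mem_Ioi, Finset.mem_filter, Finset.mem_univ, true_and, Fin.lt_def]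
      omega
    have hIci : Finset.univ.filter (fun i : Fin (n + 1) => (β : ℕ) ≤ (i : ℕ))
        = insert β (Finset.Ioi β) := by
      ext i
      simp only [Finset.mem_filter, Finset.mem_univ, true_and, Finset.mem_insert,
        Finset.mem_Ioi, Fin.lt_def]
      constructor
      · intro h
        rcases Nat.eq_or_lt_of_le h with h | h
        · exact Or.inl (Fin.ext h.symm)
        · exact Or.inr h
      · rintro (rfl | h) <;> omega
    have hsumIci : (∑ i ∈ Finset.univ.filter (fun i : Fin (n + 1) => (β : ℕ) ≤ (i : ℕ)), a i)
        = a β + ∑ i ∈ Finset.Ioi β, a i := by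
      rw [hIci, Finset.sum_insert (by simp)]
    rw [hCdef, hGdef]
    simp only
    rw [← hIoi, hsumIci]
    rcases lt_trichotomy β α with h | h | h
    · have h1 : (β : ℕ) + 1 ≤ (α : ℕ) := Fin.lt_def.mp h
      have h2 : (β : ℕ) ≤ (α : ℕ) := le_of_lt h1
      rw [if_pos h1, if_pos h2, if_pos h, if_neg (ne_of_gt h), pow_add]
      ring
    · subst h
      have h1 : ¬ ((β : ℕ) + 1 ≤ (β : ℕ)) := by omega
      have h2 : (β : ℕ) ≤ (β : ℕ) := le_rfl
      rw [if_neg h1, if_pos h2, if_pos rfl, if_neg (lt_irrefl β), pow_add]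
      ring
    · have hβα := Fin.lt_def.mp h
      have h1 : ¬ ((β : ℕ) + 1 ≤ (α : ℕ)) := by omega
      have h2 : ¬ ((β : ℕ) ≤ (α : ℕ)) := by omega
      rw [if_neg h1, if_neg h2, if_neg (ne_of_lt h), if_neg (not_lt_of_gt h), pow_add]
      ring
  rw [Finset.sum_congr rfl (fun β _ => hCG β)]
  rw [Fin.sum_univ_eq_sum_range (fun j => G (j + 1) - G j) (n + 1)]
  rw [Finset.sum_range_sub G (n + 1)]
  have hG0 : G 0 = z * t ^ l := by
    have h2 : Finset.univ.filter (fun i : Fin (n + 1) => 0 ≤ (i : ℕ)) = Finset.univ :=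
      Finset.filter_true_of_mem (fun i _ => Nat.zero_le _)
    simp only [hGdef]
    rw [h2, ha, if_pos (Nat.zero_le _), pow_one]
  have hGn : G (n + 1) = 1 := by
    have h1 : ¬ (n + 1 ≤ (α : ℕ)) := by omega
    have h2 : Finset.univ.filter (fun i : Fin (n + 1) => n + 1 ≤ (i : ℕ)) = ∅ := by
      rw [Finset.filter_eq_empty_iff]
      intro i _
      omega
    simp only [hGdef]
    rw [if_neg h1, h2]
    simp
  rw [hG0, hGn]
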